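/- The Dynin-Folland Lie algebra 𝔥_{n,2} is nilpotent of step 3 (all triple brackets [A,[B,[C,D]]] vanish while some double bracket is nonzero), and its centre equals ℝ·X_s. -/
import Mathlib


noncomputable section

abbrev Hgrp (n : ℕ) := (Fin n → ℝ) × (Fin n → ℝ) × ℝ

def hdot {n : ℕ} (p q : Fin n → ℝ) : ℝ := ∑ i, p i * q i

/-- The Heisenberg group law on `ℝ^{2n+1}`. -/
def hmul {n : ℕ} (X Y : Hgrp n) : Hgrp n :=
  (X.1 + Y.1, X.2.1 + Y.2.1,
    X.2.2 + Y.2.2 + (1 / 2) * (hdot X.1 Y.2.1 - hdot X.2.1 Y.1))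

/-- The Heisenberg Lie bracket on `ℝ^{2n+1}`. -/
def hbr {n : ℕ} (X Y : Hgrp n) : Hgrp n := (0, 0, hdot X.1 Y.2.1 - hdot X.2.1 Y.1)

/-- `ad*(𝒫)(𝒬') = (z'v, -z'u, 0)` for `𝒫 = (u,v,w)`, `𝒬' = (x',y',z')`. -/
def adstar {n : ℕ} (P Q : Hgrp n) : Hgrp n := (Q.2.2 • P.2.1, -(Q.2.2 • P.1), 0)

/-- The standard inner product on `ℝ^{2n+1}`. -/
def hinner {n : ℕ} (X Y : Hgrp n) : ℝ := hdot X.1 Y.1 + hdot X.2.1 Y.2.1 + X.2.2 * Y.2.2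

/-- Elements `(𝒫, 𝒬, 𝒮)` of the Dynin-Folland Lie algebra/group. -/
abbrev DF (n : ℕ) := Hgrp n × Hgrp n × ℝ

/-- The Dynin-Folland Lie bracket. -/
def dfbr {n : ℕ} (A B : DF n) : DF n :=
  (hbr A.1 B.1,
   (1 / 2 : ℝ) • (adstar A.1 B.2.1 - adstar B.1 A.2.1),
   hinner A.1 B.2.1 - hinner A.2.1 B.1)

/-- The Dynin-Folland group law. -/
def dfmul {n : ℕ} (A B : DF n) : DF n :=
  (hmul A.1 B.1,
   A.2.1 + B.2.1 + (1 / 4 : ℝ) • (adstar A.1 B.2.1 - adstar B.1 A.2.1),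
   A.2.2 + B.2.2 + (1 / 2) * (hinner A.1 B.2.1 - hinner A.2.1 B.1)
     - (1 / 8) * hinner (A.2.1 - B.2.1) (hbr A.1 B.1))

lemma hdot_zero_right {n : ℕ} (p : Fin n → ℝ) : hdot p 0 = 0 := by simp [hdot]

lemma hdot_zero_left {n : ℕ} (p : Fin n → ℝ) : hdot (0 : Fin n → ℝ) p = 0 := by simp [hdot]

lemma hdot_single_right {n : ℕ} (p : Fin n → ℝ) (i : Fin n) : hdot p (Pi.single i 1) = p i := by
  simp [hdot, Pi.single_apply]

lemma hdot_single_left {n : ℕ} (p : Fin n → ℝ) (i : Fin n) : hdot (Pi.single i 1) p = p i := by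
  simp [hdot, Pi.single_apply]

/-- The Dynin-Folland Lie algebra is nilpotent of step 3 and its centre is `ℝ·X_s`. -/
theorem dynin_folland_step_three_and_centre (n : ℕ) (hn : 0 < n) :
    (∀ A B C D : DF n, dfbr A (dfbr B (dfbr C D)) = 0) ∧
    (∃ B C D : DF n, dfbr B (dfbr C D) ≠ 0) ∧
    {A : DF n | ∀ B : DF n, dfbr A B = 0} = {A : DF n | ∃ s : ℝ, A = (0, 0, s)} := by
  refine ⟨?_, ?_, ?_⟩
  · intro A B C D
    obtain ⟨⟨Au,Av,Aw⟩,⟨Ax,Ay,Az⟩,As⟩ := A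
    obtain ⟨⟨Bu,Bv,Bw⟩,⟨Bx,By,Bz⟩,Bs⟩ := B
    obtain ⟨⟨Cu,Cv,Cw⟩,⟨Cx,Cy,Cz⟩,Cs⟩ := C
    obtain ⟨⟨Du,Dv,Dw⟩,⟨Dx,Dy,Dz⟩,Ds⟩ := D
    simp [dfbr, hbr, adstar, hinner, hdot_zero_left, hdot_zero_right, Prod.ext_iff]
  · set i : Fin n := ⟨0, hn⟩
    refine ⟨((0,0,0),(0,0,1),0), ((Pi.single i 1,0,0),(0,0,0),0),
      ((0,Pi.single i 1,0),(0,0,0),0), ?_⟩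
    simp [dfbr, hbr, adstar, hinner, hdot_zero_left, hdot_zero_right, hdot_single_left,
      hdot_single_right, Prod.ext_iff]
  · ext A
    simp only [Set.mem_setOf_eq]
    constructor
    · intro h
      obtain ⟨⟨Au,Av,Aw⟩,⟨Ax,Ay,Az⟩,As⟩ := A
      refine ⟨As, ?_⟩
      have h1 : ∀ i : Fin n, Av i = 0 ∧ Az = 0 ∧ Ax i = 0 := by
        intro i
        have := h ((Pi.single i 1,0,0),(0,0,0),0)
        simpa [dfbr, hbr, adstar, hinner, hdot_zero_left, hdot_zero_right, hdot_single_left,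
          hdot_single_right, Prod.ext_iff, funext_iff, Pi.single_apply] using this
      have h2 : ∀ i : Fin n, Au i = 0 ∧ Az = 0 ∧ Ay i = 0 := by
        intro i
        have := h ((0,Pi.single i 1,0),(0,0,0),0)
        simpa [dfbr, hbr, adstar, hinner, hdot_zero_left, hdot_zero_right, hdot_single_left,
          hdot_single_right, Prod.ext_iff, funext_iff, Pi.single_apply] using this
      have h3 : ((∀ x : Fin n, Av x = 0) ∧ ∀ x : Fin n, Au x = 0) ∧ Aw = 0 := by
        have := h ((0,0,0),(0,0,1),0)
        simpa [dfbr, hbr, adstar, hinner, hdot_zero_left, hdot_zero_right,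
          Prod.ext_iff, funext_iff] using this
      have hAz : Az = 0 := (h1 ⟨0, hn⟩).2.1
      simp only [Prod.ext_iff, funext_iff]
      exact ⟨⟨fun i => (h2 i).1, ⟨fun i => (h1 i).1, h3.2⟩⟩,
        ⟨fun i => (h1 i).2.2, ⟨fun i => (h2 i).2.2, hAz⟩⟩, trivial⟩
    · rintro ⟨s, rfl⟩
      intro B
      obtain ⟨⟨Bu,Bv,Bw⟩,⟨Bx,By,Bz⟩,Bs⟩ := B
      simp [dfbr, hbr, adstar, hinner, hdot_zero_left, hdot_zero_right, Prod.ext_iff]
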